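/- arXiv:1903.09601 — 3 statements merged into one kernel-verified Lean document; each statement's English description precedes it below -/
import Mathlib

section
/- Let μ = ∑_{j∈𝒜} p_j (f_j)_*μ be a self-affine measure with f_j = A_j + b_j affine contractions. For any finite stopping set 𝒲 of words (every infinite word has exactly one prefix in 𝒲) and any ξ ∈ ℝ^d, |μ̂(ξ)|² ≤ ∬ ∑_{w∈𝒲} p_w e^{-2πi ⟨A_w^⊤ ξ, x−y⟩} dμ(x) dμ(y), where A_w = A_{w_1}⋯A_{w_n} and μ̂(ξ) = ∫ e^{-2πi ⟨ξ,x⟩} dμ(x). -/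
set_option linter.unusedSectionVars false
set_option linter.unusedVariables false
set_option maxHeartbeats 1000000
open MeasureTheory Metric Finset
open scoped RealInnerProductSpace


section Comb
variable {𝒜 : Type*} [Fintype 𝒜]

def Stop (W : Finset (List 𝒜)) : Prop :=
  ∀ ω : ℕ → 𝒜, ∃! w, w ∈ W ∧ ∀ i : Fin w.length, w.get i = ω i

lemma stop_nil [Nonempty 𝒜] {W : Finset (List 𝒜)} (h : Stop W) (hn : ([] : List 𝒜) ∈ W) :
    W = {[]} := by
  ext w
  simp only [Finset.mem_singleton]
  constructor
  · intro hw
    by_contra hne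
    obtain ⟨a⟩ := ‹Nonempty 𝒜›
    set ω : ℕ → 𝒜 := fun n => if hh : n < w.length then w.get ⟨n, hh⟩ else a with hω
    obtain ⟨v, hv, huniq⟩ := h ω
    have h1 : w = v := huniq w ⟨hw, fun i => by simp [hω, i.isLt]⟩
    have h2 : ([] : List 𝒜) = v := huniq [] ⟨hn, fun i => absurd i.isLt (by simp)⟩
    exact hne (h1.trans h2.symm)
  · rintro rfl; exact hn

def Wj (W : Finset (List 𝒜)) (j : 𝒜) [DecidableEq 𝒜] : Finset (List 𝒜) :=
  (W.filter (fun w => w.head? = some j)).image List.tail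

variable [DecidableEq 𝒜]

lemma mem_Wj {W : Finset (List 𝒜)} (hnil : ([] : List 𝒜) ∉ W) {j : 𝒜} {t : List 𝒜} :
    t ∈ Wj W j ↔ j :: t ∈ W := by
  simp only [Wj, Finset.mem_image, Finset.mem_filter]
  constructor
  · rintro ⟨w, ⟨hw, hh⟩, rfl⟩
    cases w with
    | nil => simp at hh
    | cons a s => simp_all
  · intro h
    exact ⟨j :: t, ⟨h, rfl⟩, rfl⟩

lemma stop_Wj {W : Finset (List 𝒜)} (h : Stop W) (hnil : ([] : List 𝒜) ∉ W) (j : 𝒜) :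
    Stop (Wj W j) := by
  intro ω
  set ω' : ℕ → 𝒜 := fun n => Nat.casesOn n j ω with hω'
  obtain ⟨w, ⟨hwW, hwpre⟩, huniq⟩ := h ω'
  have hwne : w ≠ [] := by rintro rfl; exact hnil hwW
  obtain ⟨a, t, rfl⟩ := List.exists_cons_of_ne_nil hwne
  obtain rfl : j = a := (hwpre ⟨0, by simp⟩).symm
  refine ⟨t, ⟨(mem_Wj hnil).2 hwW, fun i => ?_⟩, ?_⟩
  · have := hwpre ⟨i.1 + 1, by simpa using Nat.succ_lt_succ i.isLt⟩
    simpa using this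
  · rintro t' ⟨ht'W, ht'pre⟩
    have : (j :: t') = (j :: t) := by
      apply huniq
      refine ⟨(mem_Wj hnil).1 ht'W, fun i => ?_⟩
      match i with
      | ⟨0, _⟩ => rfl
      | ⟨k+1, hk⟩ =>
        have := ht'pre ⟨k, by simpa using Nat.lt_of_succ_lt_succ hk⟩
        simpa using this
    simpa using this

lemma sum_decomp [Nonempty 𝒜] {M : Type*} [AddCommMonoid M] {W : Finset (List 𝒜)}
    (hnil : ([] : List 𝒜) ∉ W) (F : List 𝒜 → M) :
    ∑ w ∈ W, F w = ∑ j, ∑ t ∈ Wj W j, F (j :: t) := by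
  letI : Inhabited 𝒜 := Classical.inhabited_of_nonempty ‹_›
  rw [← Finset.sum_fiberwise (s := W) (g := fun w => w.headI) (f := F)]
  refine Finset.sum_congr rfl fun j _ => ?_
  rw [← Finset.sum_image (g := (j :: ·)) (f := F) (by simp)]
  congr 1
  ext w
  simp only [Finset.mem_filter, Finset.mem_image]
  constructor
  · rintro ⟨hw, hh⟩
    have hne : w ≠ [] := by rintro rfl; exact hnil hw
    obtain ⟨a, t, rfl⟩ := List.exists_cons_of_ne_nil hne
    simp only [List.headI] at hh
    subst hh
    exact ⟨t, (mem_Wj hnil).2 hw, rfl⟩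
  · rintro ⟨t, ht, rfl⟩
    exact ⟨(mem_Wj hnil).1 ht, rfl⟩

end Comb

section Analysis

variable {d : ℕ} {𝒜 : Type*} [Fintype 𝒜] [DecidableEq 𝒜]

local notation "E" => EuclideanSpace ℝ (Fin d)

noncomputable def Fw (f : 𝒜 → E → E) (w : List 𝒜) : E → E :=
  w.foldr (fun j g => f j ∘ g) id

lemma Fw_nil (f : 𝒜 → E → E) : Fw f [] = id := rfl
lemma Fw_cons (f : 𝒜 → E → E) (j : 𝒜) (t : List 𝒜) (x : E) :
    Fw f (j :: t) x = f j (Fw f t x) := rfl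

lemma integrable_aux (μ : Measure E) [IsFiniteMeasure μ] {g : E → ℂ} (hc : Continuous g)
    {C : ℝ} (hb : ∀ x, ‖g x‖ ≤ C) : Integrable g μ :=
  (integrable_const C).mono' hc.aestronglyMeasurable (Filter.Eventually.of_forall hb)

lemma step (μ : Measure E) [IsProbabilityMeasure μ] (p : 𝒜 → ℝ) (hp0 : ∀ j, 0 ≤ p j)
    (f : 𝒜 → E → E) (hfc : ∀ j, Continuous (f j))
    (hμ : μ = ∑ j, ENNReal.ofReal (p j) • μ.map (f j))
    (g : E → ℂ) (hgc : Continuous g) (hgb : ∀ x, ‖g x‖ ≤ 1) :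
    ∫ x, g x ∂μ = ∑ j, p j • ∫ x, g (f j x) ∂μ := by
  have hfin : ∀ j : 𝒜, IsFiniteMeasure (ENNReal.ofReal (p j) • μ.map (f j)) := by
    intro j
    refine ⟨?_⟩
    rw [Measure.smul_apply, smul_eq_mul]
    exact ENNReal.mul_lt_top ENNReal.ofReal_lt_top (measure_lt_top _ _)
  nth_rewrite 1 [hμ]
  rw [integral_finset_sum_measure (fun j _ => by
    haveI := hfin j
    exact integrable_aux _ hgc hgb)]
  refine Finset.sum_congr rfl fun j _ => ?_
  rw [integral_smul_measure, ENNReal.toReal_ofReal (hp0 j),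
    integral_map (hfc j).aemeasurable hgc.aestronglyMeasurable]

lemma main_induction [Nonempty 𝒜] (μ : Measure E) [IsProbabilityMeasure μ]
    (p : 𝒜 → ℝ) (hp0 : ∀ j, 0 ≤ p j)
    (f : 𝒜 → E → E) (hfc : ∀ j, Continuous (f j))
    (hμ : μ = ∑ j, ENNReal.ofReal (p j) • μ.map (f j)) :
    ∀ (n : ℕ) (W : Finset (List 𝒜)), Stop W → (∀ w ∈ W, w.length ≤ n) →
    ∀ g : E → ℂ, Continuous g → (∀ x, ‖g x‖ ≤ 1) →
    ∫ x, g x ∂μ = ∑ w ∈ W, ((w.map p).prod) • ∫ x, g (Fw f w x) ∂μ := by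
  intro n
  induction n with
  | zero =>
    intro W hW hlen g hgc hgb
    have hWnil : W = {[]} := by
      obtain ⟨a⟩ := ‹Nonempty 𝒜›
      obtain ⟨w, ⟨hwW, _⟩, _⟩ := hW (fun _ => a)
      have : w = [] := List.eq_nil_of_length_eq_zero (Nat.le_zero.1 (hlen w hwW))
      exact stop_nil hW (this ▸ hwW)
    subst hWnil
    simp [Fw_nil]
  | succ n ih =>
    intro W hW hlen g hgc hgb
    by_cases hnil : ([] : List 𝒜) ∈ W
    · rw [stop_nil hW hnil]
      simp [Fw_nil]
    · rw [sum_decomp hnil, step μ p hp0 f hfc hμ g hgc hgb]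
      refine Finset.sum_congr rfl fun j _ => ?_
      rw [ih (Wj W j) (stop_Wj hW hnil j)
        (fun t ht => by
          have := hlen (j :: t) ((mem_Wj hnil).1 ht)
          simpa using this)
        (fun x => g (f j x)) (hgc.comp (hfc j)) (fun x => hgb _), Finset.smul_sum]
      refine Finset.sum_congr rfl fun t ht => ?_
      rw [smul_smul]
      simp [Fw_cons]

end Analysis


section Aux
variable {d : ℕ} {𝒜 : Type*} [Fintype 𝒜] [DecidableEq 𝒜]
local notation "E" => EuclideanSpace ℝ (Fin d)

lemma Fw_affine (A : 𝒜 → E ≃L[ℝ] E) (b : 𝒜 → E) (f : 𝒜 → E → E)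
    (hf : ∀ j x, f j x = A j x + b j) (w : List 𝒜) :
    ∃ c : E, ∀ x, Fw f w x =
      ((w.map fun j => ((A j : E →L[ℝ] E))).prod) x + c := by
  induction w with
  | nil => exact ⟨0, fun x => by simp [Fw_nil]⟩
  | cons j t ih =>
    obtain ⟨c, hc⟩ := ih
    refine ⟨A j c + b j, fun x => ?_⟩
    rw [Fw_cons, hc, hf]
    simp [List.prod_cons, ContinuousLinearMap.mul_apply, map_add, add_assoc]

lemma norm_exp_aux (r : ℝ) : ‖Complex.exp (-(2 * Real.pi * Complex.I) * (r:ℂ))‖ = 1 := by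
  have h : -(2 * Real.pi * Complex.I) * (r:ℂ) = ((-(2 * Real.pi * r) : ℝ) : ℂ) * Complex.I := by
    push_cast; ring
  rw [h, Complex.norm_exp_ofReal_mul_I]

lemma cont_e (η : E) :
    Continuous fun x : E => Complex.exp (-(2 * Real.pi * Complex.I) * ((⟪η, x⟫ : ℝ) : ℂ)) :=
  Complex.continuous_exp.comp (continuous_const.mul
    (Complex.continuous_ofReal.comp (continuous_const.inner continuous_id)))

lemma split_e (η x y : E) :
    Complex.exp (-(2 * Real.pi * Complex.I) * ((⟪η, x - y⟫ : ℝ) : ℂ))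
      = Complex.exp (-(2 * Real.pi * Complex.I) * ((⟪η, x⟫ : ℝ) : ℂ)) *
        (starRingEnd ℂ) (Complex.exp (-(2 * Real.pi * Complex.I) * ((⟪η, y⟫ : ℝ) : ℂ))) := by
  rw [← Complex.exp_conj, ← Complex.exp_add]
  congr 1
  have h : (starRingEnd ℂ) (-(2 * Real.pi * Complex.I) * ((⟪η, y⟫ : ℝ) : ℂ))
      = (2 * Real.pi * Complex.I) * ((⟪η, y⟫ : ℝ) : ℂ) := by
    simp only [map_mul, map_neg, Complex.conj_I, Complex.conj_ofReal, map_ofNat]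
    ring
  rw [h, inner_sub_right]
  push_cast
  ring

end Aux


/-- Cauchy–Schwarz bound for the Fourier transform of a self-affine measure over a stopping set. -/
theorem stmt1 {d : ℕ} {𝒜 : Type*} [Fintype 𝒜]
    (A : 𝒜 → (EuclideanSpace ℝ (Fin d)) ≃L[ℝ] (EuclideanSpace ℝ (Fin d)))
    (b : 𝒜 → EuclideanSpace ℝ (Fin d)) (p : 𝒜 → ℝ)
    (hA : ∀ j, ‖((A j : EuclideanSpace ℝ (Fin d) →L[ℝ] EuclideanSpace ℝ (Fin d)))‖ < 1)
    (hp0 : ∀ j, 0 < p j) (hp1 : ∀ j, p j < 1) (hpsum : ∑ j, p j = 1)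
    (f : 𝒜 → EuclideanSpace ℝ (Fin d) → EuclideanSpace ℝ (Fin d))
    (hf : ∀ j x, f j x = A j x + b j)
    (μ : Measure (EuclideanSpace ℝ (Fin d))) [IsProbabilityMeasure μ]
    (K : Set (EuclideanSpace ℝ (Fin d))) (hK : IsCompact K) (hKμ : μ Kᶜ = 0)
    (hμ : μ = ∑ j, ENNReal.ofReal (p j) • μ.map (f j))
    (𝒲 : Finset (List 𝒜))
    (h𝒲 : ∀ ω : ℕ → 𝒜, ∃! w, w ∈ 𝒲 ∧ ∀ i : Fin w.length, w.get i = ω i)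
    (ξ : EuclideanSpace ℝ (Fin d)) :
    ‖∫ x, Complex.exp (-(2 * Real.pi * Complex.I) * (⟪ξ, x⟫ : ℝ)) ∂μ‖ ^ 2 ≤
      (∫ x, ∫ y, ∑ w ∈ 𝒲, ((w.map p).prod : ℂ) *
          Complex.exp (-(2 * Real.pi * Complex.I) *
            ((⟪ContinuousLinearMap.adjoint
                ((w.map fun j => ((A j : EuclideanSpace ℝ (Fin d) →L[ℝ]
                    EuclideanSpace ℝ (Fin d)))).prod) ξ, x - y⟫ : ℝ)))
        ∂μ ∂μ).re := by
  classical
  have hne : Nonempty 𝒜 := by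
    by_contra h
    haveI : IsEmpty 𝒜 := not_nonempty_iff.1 h
    have h0 : μ = 0 := by simpa using hμ
    have h1 : μ Set.univ = 1 := measure_univ
    rw [h0] at h1
    simp at h1
  have hp0' : ∀ j, 0 ≤ p j := fun j => (hp0 j).le
  have hfc : ∀ j, Continuous (f j) := fun j => by
    have hj : f j = fun x => A j x + b j := funext (hf j)
    rw [hj]
    exact ((A j).continuous).add continuous_const
  have hpw0 : ∀ w : List 𝒜, 0 ≤ (w.map p).prod := by
    intro w
    induction w with
    | nil => simp
    | cons j t ih => rw [List.map_cons, List.prod_cons]; exact mul_nonneg (hp0' j) ih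
  have hdecomp := main_induction μ p hp0' f hfc hμ (𝒲.sup List.length) 𝒲 h𝒲
      (fun w hw => Finset.le_sup hw)
      (fun x => Complex.exp (-(2 * Real.pi * Complex.I) * ((⟪ξ, x⟫ : ℝ) : ℂ)))
      (cont_e ξ) (fun x => le_of_eq (norm_exp_aux _))
  have hsum1 : ∑ w ∈ 𝒲, (w.map p).prod = 1 := by
    have h1 := main_induction μ p hp0' f hfc hμ (𝒲.sup List.length) 𝒲 h𝒲
      (fun w hw => Finset.le_sup hw) (fun _ => (1:ℂ)) continuous_const (fun x => by simp)
    simp only [integral_const, measure_univ, probReal_univ, ENNReal.toReal_one, one_smul,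
      Complex.real_smul, mul_one] at h1
    exact_mod_cast h1.symm
  have hword : ∀ w : List 𝒜, ∃ u : ℂ, ‖u‖ = 1 ∧
      (∫ x, Complex.exp (-(2 * Real.pi * Complex.I) * ((⟪ξ, Fw f w x⟫ : ℝ) : ℂ)) ∂μ) = u * (∫ x, Complex.exp (-(2 * Real.pi * Complex.I) * ((⟪ContinuousLinearMap.adjoint ((w.map fun j => ((A j : EuclideanSpace ℝ (Fin d) →L[ℝ] EuclideanSpace ℝ (Fin d)))).prod) ξ, x⟫ : ℝ) : ℂ)) ∂μ) := by
    intro w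
    obtain ⟨c, hc⟩ := Fw_affine A b f hf w
    refine ⟨Complex.exp (-(2 * Real.pi * Complex.I) * ((⟪ξ, c⟫ : ℝ) : ℂ)), norm_exp_aux _, ?_⟩
    have key : ∀ x : EuclideanSpace ℝ (Fin d),
        Complex.exp (-(2 * Real.pi * Complex.I) * ((⟪ξ, Fw f w x⟫ : ℝ) : ℂ)) = Complex.exp (-(2 * Real.pi * Complex.I) * ((⟪ξ, c⟫ : ℝ) : ℂ)) * Complex.exp (-(2 * Real.pi * Complex.I) * ((⟪ContinuousLinearMap.adjoint ((w.map fun j => ((A j : EuclideanSpace ℝ (Fin d) →L[ℝ] EuclideanSpace ℝ (Fin d)))).prod) ξ, x⟫ : ℝ) : ℂ)) := by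
      intro x
      rw [hc x, ← Complex.exp_add]
      congr 1
      rw [inner_add_right, ContinuousLinearMap.adjoint_inner_left]
      push_cast
      ring
    simp_rw [key]
    rw [integral_const_mul]
  have hint1 : ∀ (a : ℂ) (ηv : EuclideanSpace ℝ (Fin d)),
      Integrable (fun y => a * (starRingEnd ℂ) (Complex.exp (-(2 * Real.pi * Complex.I) * ((⟪ηv, y⟫ : ℝ) : ℂ)))) μ := by
    intro a ηv
    refine integrable_aux μ (continuous_const.mul (continuous_star.comp (cont_e ηv)))
      (C := ‖a‖) (fun y => le_of_eq ?_)
    rw [norm_mul, RCLike.norm_conj, norm_exp_aux, mul_one]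
  have hint2 : ∀ (a k : ℂ) (ηv : EuclideanSpace ℝ (Fin d)),
      Integrable (fun x => a * (Complex.exp (-(2 * Real.pi * Complex.I) * ((⟪ηv, x⟫ : ℝ) : ℂ))) * k) μ := by
    intro a k ηv
    refine integrable_aux μ ((continuous_const.mul (cont_e ηv)).mul continuous_const)
      (C := ‖a‖ * 1 * ‖k‖) (fun x => le_of_eq ?_)
    rw [norm_mul, norm_mul, norm_exp_aux]
  have hRHS : (∫ x, ∫ y, ∑ w ∈ 𝒲, ((w.map p).prod : ℂ) * Complex.exp (-(2 * Real.pi * Complex.I) * ((⟪ContinuousLinearMap.adjoint ((w.map fun j => ((A j : EuclideanSpace ℝ (Fin d) →L[ℝ] EuclideanSpace ℝ (Fin d)))).prod) ξ, x - y⟫ : ℝ) : ℂ)) ∂μ ∂μ)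
      = ∑ w ∈ 𝒲, ((w.map p).prod : ℂ) * (∫ x, Complex.exp (-(2 * Real.pi * Complex.I) * ((⟪ContinuousLinearMap.adjoint ((w.map fun j => ((A j : EuclideanSpace ℝ (Fin d) →L[ℝ] EuclideanSpace ℝ (Fin d)))).prod) ξ, x⟫ : ℝ) : ℂ)) ∂μ) * (starRingEnd ℂ) (∫ x, Complex.exp (-(2 * Real.pi * Complex.I) * ((⟪ContinuousLinearMap.adjoint ((w.map fun j => ((A j : EuclideanSpace ℝ (Fin d) →L[ℝ] EuclideanSpace ℝ (Fin d)))).prod) ξ, x⟫ : ℝ) : ℂ)) ∂μ) := by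
    have step1 : (∫ x, ∫ y, ∑ w ∈ 𝒲, ((w.map p).prod : ℂ) * Complex.exp (-(2 * Real.pi * Complex.I) * ((⟪ContinuousLinearMap.adjoint ((w.map fun j => ((A j : EuclideanSpace ℝ (Fin d) →L[ℝ] EuclideanSpace ℝ (Fin d)))).prod) ξ, x - y⟫ : ℝ) : ℂ)) ∂μ ∂μ)
        = ∫ x, ∑ w ∈ 𝒲, ((w.map p).prod : ℂ) * (Complex.exp (-(2 * Real.pi * Complex.I) * ((⟪ContinuousLinearMap.adjoint ((w.map fun j => ((A j : EuclideanSpace ℝ (Fin d) →L[ℝ] EuclideanSpace ℝ (Fin d)))).prod) ξ, x⟫ : ℝ) : ℂ))) * (starRingEnd ℂ) (∫ x, Complex.exp (-(2 * Real.pi * Complex.I) * ((⟪ContinuousLinearMap.adjoint ((w.map fun j => ((A j : EuclideanSpace ℝ (Fin d) →L[ℝ] EuclideanSpace ℝ (Fin d)))).prod) ξ, x⟫ : ℝ) : ℂ)) ∂μ) ∂μ := by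
      refine integral_congr_ae (Filter.Eventually.of_forall fun x => ?_)
      simp_rw [split_e, ← mul_assoc]
      rw [integral_finset_sum 𝒲 (fun w _ => hint1 _ _)]
      refine Finset.sum_congr rfl fun w _ => ?_
      rw [integral_const_mul, integral_conj]
    rw [step1, integral_finset_sum 𝒲 (fun w _ => hint2 _ _ _)]
    refine Finset.sum_congr rfl fun w _ => ?_
    rw [integral_mul_const, integral_const_mul]
  rw [hRHS]
  have hre : (∑ w ∈ 𝒲, ((w.map p).prod : ℂ) * (∫ x, Complex.exp (-(2 * Real.pi * Complex.I) * ((⟪ContinuousLinearMap.adjoint ((w.map fun j => ((A j : EuclideanSpace ℝ (Fin d) →L[ℝ] EuclideanSpace ℝ (Fin d)))).prod) ξ, x⟫ : ℝ) : ℂ)) ∂μ) * (starRingEnd ℂ) (∫ x, Complex.exp (-(2 * Real.pi * Complex.I) * ((⟪ContinuousLinearMap.adjoint ((w.map fun j => ((A j : EuclideanSpace ℝ (Fin d) →L[ℝ] EuclideanSpace ℝ (Fin d)))).prod) ξ, x⟫ : ℝ) : ℂ)) ∂μ)).re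
      = ∑ w ∈ 𝒲, (w.map p).prod * ‖(∫ x, Complex.exp (-(2 * Real.pi * Complex.I) * ((⟪ContinuousLinearMap.adjoint ((w.map fun j => ((A j : EuclideanSpace ℝ (Fin d) →L[ℝ] EuclideanSpace ℝ (Fin d)))).prod) ξ, x⟫ : ℝ) : ℂ)) ∂μ)‖ ^ 2 := by
    rw [Complex.re_sum]
    refine Finset.sum_congr rfl fun w _ => ?_
    rw [mul_assoc, Complex.mul_conj, ← Complex.ofReal_mul, Complex.ofReal_re,
      Complex.normSq_eq_norm_sq]
  rw [hre]
  have hMle : ‖(∫ x, Complex.exp (-(2 * Real.pi * Complex.I) * ((⟪ξ, x⟫ : ℝ) : ℂ)) ∂μ)‖ ≤ ∑ w ∈ 𝒲, (w.map p).prod * ‖(∫ x, Complex.exp (-(2 * Real.pi * Complex.I) * ((⟪ContinuousLinearMap.adjoint ((w.map fun j => ((A j : EuclideanSpace ℝ (Fin d) →L[ℝ] EuclideanSpace ℝ (Fin d)))).prod) ξ, x⟫ : ℝ) : ℂ)) ∂μ)‖ := by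
    rw [hdecomp]
    refine (norm_sum_le _ _).trans (le_of_eq (Finset.sum_congr rfl fun w _ => ?_))
    obtain ⟨u, hu1, hu2⟩ := hword w
    rw [norm_smul, hu2, norm_mul, hu1, one_mul, Real.norm_eq_abs, abs_of_nonneg (hpw0 w)]
  have hCS : (∑ w ∈ 𝒲, (w.map p).prod * ‖(∫ x, Complex.exp (-(2 * Real.pi * Complex.I) * ((⟪ContinuousLinearMap.adjoint ((w.map fun j => ((A j : EuclideanSpace ℝ (Fin d) →L[ℝ] EuclideanSpace ℝ (Fin d)))).prod) ξ, x⟫ : ℝ) : ℂ)) ∂μ)‖) ^ 2 ≤ ∑ w ∈ 𝒲, (w.map p).prod * ‖(∫ x, Complex.exp (-(2 * Real.pi * Complex.I) * ((⟪ContinuousLinearMap.adjoint ((w.map fun j => ((A j : EuclideanSpace ℝ (Fin d) →L[ℝ] EuclideanSpace ℝ (Fin d)))).prod) ξ, x⟫ : ℝ) : ℂ)) ∂μ)‖ ^ 2 := by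
    have h2 := Finset.sum_mul_sq_le_sq_mul_sq 𝒲 (fun w => Real.sqrt ((w.map p).prod))
      (fun w => Real.sqrt ((w.map p).prod) * ‖(∫ x, Complex.exp (-(2 * Real.pi * Complex.I) * ((⟪ContinuousLinearMap.adjoint ((w.map fun j => ((A j : EuclideanSpace ℝ (Fin d) →L[ℝ] EuclideanSpace ℝ (Fin d)))).prod) ξ, x⟫ : ℝ) : ℂ)) ∂μ)‖)
    have e1 : ∑ w ∈ 𝒲, Real.sqrt ((w.map p).prod) ^ 2 = 1 := by
      rw [Finset.sum_congr rfl fun w _ => Real.sq_sqrt (hpw0 w), hsum1]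
    have e2 : (∑ w ∈ 𝒲, (w.map p).prod * ‖(∫ x, Complex.exp (-(2 * Real.pi * Complex.I) * ((⟪ContinuousLinearMap.adjoint ((w.map fun j => ((A j : EuclideanSpace ℝ (Fin d) →L[ℝ] EuclideanSpace ℝ (Fin d)))).prod) ξ, x⟫ : ℝ) : ℂ)) ∂μ)‖)
        = ∑ w ∈ 𝒲, Real.sqrt ((w.map p).prod) * (Real.sqrt ((w.map p).prod) * ‖(∫ x, Complex.exp (-(2 * Real.pi * Complex.I) * ((⟪ContinuousLinearMap.adjoint ((w.map fun j => ((A j : EuclideanSpace ℝ (Fin d) →L[ℝ] EuclideanSpace ℝ (Fin d)))).prod) ξ, x⟫ : ℝ) : ℂ)) ∂μ)‖) := by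
      refine Finset.sum_congr rfl fun w _ => ?_
      rw [← mul_assoc, Real.mul_self_sqrt (hpw0 w)]
    have e3 : (∑ w ∈ 𝒲, (Real.sqrt ((w.map p).prod) * ‖(∫ x, Complex.exp (-(2 * Real.pi * Complex.I) * ((⟪ContinuousLinearMap.adjoint ((w.map fun j => ((A j : EuclideanSpace ℝ (Fin d) →L[ℝ] EuclideanSpace ℝ (Fin d)))).prod) ξ, x⟫ : ℝ) : ℂ)) ∂μ)‖) ^ 2)
        = ∑ w ∈ 𝒲, (w.map p).prod * ‖(∫ x, Complex.exp (-(2 * Real.pi * Complex.I) * ((⟪ContinuousLinearMap.adjoint ((w.map fun j => ((A j : EuclideanSpace ℝ (Fin d) →L[ℝ] EuclideanSpace ℝ (Fin d)))).prod) ξ, x⟫ : ℝ) : ℂ)) ∂μ)‖ ^ 2 := by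
      refine Finset.sum_congr rfl fun w _ => ?_
      rw [mul_pow, Real.sq_sqrt (hpw0 w)]
    calc (∑ w ∈ 𝒲, (w.map p).prod * ‖(∫ x, Complex.exp (-(2 * Real.pi * Complex.I) * ((⟪ContinuousLinearMap.adjoint ((w.map fun j => ((A j : EuclideanSpace ℝ (Fin d) →L[ℝ] EuclideanSpace ℝ (Fin d)))).prod) ξ, x⟫ : ℝ) : ℂ)) ∂μ)‖) ^ 2
        = (∑ w ∈ 𝒲, Real.sqrt ((w.map p).prod) * (Real.sqrt ((w.map p).prod) * ‖(∫ x, Complex.exp (-(2 * Real.pi * Complex.I) * ((⟪ContinuousLinearMap.adjoint ((w.map fun j => ((A j : EuclideanSpace ℝ (Fin d) →L[ℝ] EuclideanSpace ℝ (Fin d)))).prod) ξ, x⟫ : ℝ) : ℂ)) ∂μ)‖)) ^ 2 := by rw [e2]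
      _ ≤ (∑ w ∈ 𝒲, Real.sqrt ((w.map p).prod) ^ 2) * (∑ w ∈ 𝒲, (Real.sqrt ((w.map p).prod) * ‖(∫ x, Complex.exp (-(2 * Real.pi * Complex.I) * ((⟪ContinuousLinearMap.adjoint ((w.map fun j => ((A j : EuclideanSpace ℝ (Fin d) →L[ℝ] EuclideanSpace ℝ (Fin d)))).prod) ξ, x⟫ : ℝ) : ℂ)) ∂μ)‖) ^ 2) := h2
      _ = ∑ w ∈ 𝒲, (w.map p).prod * ‖(∫ x, Complex.exp (-(2 * Real.pi * Complex.I) * ((⟪ContinuousLinearMap.adjoint ((w.map fun j => ((A j : EuclideanSpace ℝ (Fin d) →L[ℝ] EuclideanSpace ℝ (Fin d)))).prod) ξ, x⟫ : ℝ) : ℂ)) ∂μ)‖ ^ 2 := by rw [e1, one_mul, e3]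
  calc ‖(∫ x, Complex.exp (-(2 * Real.pi * Complex.I) * ((⟪ξ, x⟫ : ℝ) : ℂ)) ∂μ)‖ ^ 2 = ‖(∫ x, Complex.exp (-(2 * Real.pi * Complex.I) * ((⟪ξ, x⟫ : ℝ) : ℂ)) ∂μ)‖ ^ 2 := rfl
    _ ≤ (∑ w ∈ 𝒲, (w.map p).prod * ‖(∫ x, Complex.exp (-(2 * Real.pi * Complex.I) * ((⟪ContinuousLinearMap.adjoint ((w.map fun j => ((A j : EuclideanSpace ℝ (Fin d) →L[ℝ] EuclideanSpace ℝ (Fin d)))).prod) ξ, x⟫ : ℝ) : ℂ)) ∂μ)‖) ^ 2 := pow_le_pow_left₀ (norm_nonneg _) hMle 2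
    _ ≤ ∑ w ∈ 𝒲, (w.map p).prod * ‖(∫ x, Complex.exp (-(2 * Real.pi * Complex.I) * ((⟪ContinuousLinearMap.adjoint ((w.map fun j => ((A j : EuclideanSpace ℝ (Fin d) →L[ℝ] EuclideanSpace ℝ (Fin d)))).prod) ξ, x⟫ : ℝ) : ℂ)) ∂μ)‖ ^ 2 := hCS
end

section
/- Let F ⊂ ℝ^d be the attractor of an IFS of affine contractions f_j = A_j + b_j which is not a singleton, and let μ be a self-affine measure on F. Then there exist constants C₂ > 0, r₀ > 0 and an exponent s₂ > 0 such that μ(B(x,r)) ≤ C₂ r^{s₂} for all x ∈ ℝ^d and all 0 < r ≤ r₀. In particular μ has no atoms. (Upper Frostman regularity of self-affine measures.) -/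
open MeasureTheory Metric
open scoped ENNReal NNReal

section aux
variable {𝒜 : Type*} {E : Type*}

def compWord (f : 𝒜 → E → E) : (n : ℕ) → (Fin n → 𝒜) → E → E
  | 0, _ => id
  | n+1, w => f (w 0) ∘ compWord f n (fun i => w i.succ)

lemma compWord_cons (f : 𝒜 → E → E) {n} (j : 𝒜) (w : Fin n → 𝒜) :
    compWord f (n+1) (Fin.cons j w) = f j ∘ compWord f n w := rfl

lemma measurable_compWord [MeasurableSpace E] {f : 𝒜 → E → E} (hf : ∀ j, Measurable (f j)) :
    ∀ (n : ℕ) (w : Fin n → 𝒜), Measurable (compWord f n w)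
  | 0, _ => measurable_id
  | n+1, _ => (hf _).comp (measurable_compWord hf n _)

lemma lipschitz_compWord [PseudoEMetricSpace E] {f : 𝒜 → E → E} {ρ : ℝ≥0}
    (hf : ∀ j, LipschitzWith ρ (f j)) :
    ∀ (n : ℕ) (w : Fin n → 𝒜), LipschitzWith (ρ ^ n) (compWord f n w)
  | 0, _ => by simpa [compWord] using LipschitzWith.id
  | n+1, w => by
    have h := (hf (w 0)).comp (lipschitz_compWord hf n (fun i => w i.succ))
    rw [show compWord f (n+1) w = f (w 0) ∘ compWord f n (fun i => w i.succ) from rfl]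
    simpa [pow_succ, mul_comm] using h

lemma inverse_compWord [PseudoEMetricSpace E] {f g : 𝒜 → E → E} {κ : ℝ≥0}
    (hg : ∀ j, LipschitzWith κ (g j)) (hgf : ∀ j x, g j (f j x) = x) :
    ∀ (n : ℕ) (w : Fin n → 𝒜),
      ∃ G : E → E, LipschitzWith (κ ^ n) G ∧ ∀ x, G (compWord f n w x) = x
  | 0, _ => ⟨id, by simpa using LipschitzWith.id, fun _ => rfl⟩
  | n+1, w => by
    obtain ⟨G, hG, hGf⟩ := inverse_compWord hg hgf n (fun i => w i.succ)
    refine ⟨G ∘ g (w 0), by simpa [pow_succ] using hG.comp (hg (w 0)), fun x => ?_⟩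
    show G (g (w 0) ((f (w 0) ∘ compWord f n _) x)) = x
    simp [hgf, hGf]

lemma compWord_image_subset (f : 𝒜 → E → E) {F : Set E}
    (hinv : ∀ j, f j '' F ⊆ F) :
    ∀ (n : ℕ) (w : Fin n → 𝒜), compWord f n w '' F ⊆ F
  | 0, _ => by simp [compWord]
  | n+1, w => by
    rw [show compWord f (n+1) w = f (w 0) ∘ compWord f n (fun i => w i.succ) from rfl,
      Set.image_comp]
    exact (Set.image_mono (compWord_image_subset f hinv n _)).trans (hinv _)

lemma mem_compWord_image (f : 𝒜 → E → E) {F : Set E}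
    (hinv : F ⊆ ⋃ j, f j '' F) :
    ∀ (n : ℕ) {a : E}, a ∈ F → ∃ w : Fin n → 𝒜, a ∈ compWord f n w '' F
  | 0, a, ha => ⟨Fin.elim0, a, ha, rfl⟩
  | n+1, a, ha => by
    obtain ⟨_, ⟨j, rfl⟩, y, hy, rfl⟩ := hinv ha
    obtain ⟨w, z, hz, hzy⟩ := mem_compWord_image f hinv n hy
    exact ⟨Fin.cons j w, z, hz, by rw [compWord_cons]; simp [hzy]⟩

lemma map_finset_sum' {α β ι : Type*} [MeasurableSpace α] [MeasurableSpace β]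
    (s : Finset ι) (μ : ι → Measure α) {g : α → β} (hg : Measurable g) :
    (∑ i ∈ s, μ i).map g = ∑ i ∈ s, (μ i).map g := by
  classical
  induction s using Finset.induction with
  | empty => simp
  | insert _ _ h ih => rw [Finset.sum_insert h, Measure.map_add _ _ hg, ih, Finset.sum_insert h]

lemma decomp_measure {α : Type*} [Fintype 𝒜] [MeasurableSpace α] (f : 𝒜 → α → α)
    (hfm : ∀ j, Measurable (f j)) (q : 𝒜 → ℝ≥0∞) (μ : Measure α)
    (hμ : μ = ∑ j, q j • μ.map (f j)) :
    ∀ n : ℕ, μ = ∑ w : Fin n → 𝒜, (∏ i, q (w i)) • μ.map (compWord f n w)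
  | 0 => by
    have : ∀ w : Fin 0 → 𝒜, (∏ i, q (w i)) • μ.map (compWord f 0 w) = μ := by
      intro w; simp [compWord, Measure.map_id]
    simp only [this]
    rw [Finset.sum_const, Finset.card_univ]
    simp
  | n+1 => by
    have IH := decomp_measure f hfm q μ hμ n
    calc μ = ∑ j, q j • μ.map (f j) := hμ
    _ = ∑ j, ∑ w : Fin n → 𝒜, (q j * ∏ i, q (w i)) • μ.map (compWord f (n+1) (Fin.cons j w)) := by
        refine Finset.sum_congr rfl fun j _ => ?_
        conv_lhs => rw [IH]
        rw [map_finset_sum' _ _ (hfm j), Finset.smul_sum]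
        refine Finset.sum_congr rfl fun w _ => ?_
        rw [Measure.map_smul, Measure.map_map (hfm j) (measurable_compWord hfm n w),
          compWord_cons, mul_smul]
    _ = ∑ w : Fin (n+1) → 𝒜, (∏ i, q (w i)) • μ.map (compWord f (n+1) w) := by
        rw [← Fintype.sum_prod_type']
        refine Fintype.sum_equiv (Fin.consEquiv fun _ => 𝒜) _ _ fun jw => ?_
        rcases jw with ⟨j, w⟩
        simp only [Fin.consEquiv_apply, Fin.prod_univ_succ, Fin.cons_zero, Fin.cons_succ]
        rfl

end aux

/-- Upper Frostman regularity of self-affine measures; in particular they have no atoms. -/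
theorem stmt3 {d : ℕ} {𝒜 : Type*} [Fintype 𝒜]
    (A : 𝒜 → (EuclideanSpace ℝ (Fin d)) ≃L[ℝ] (EuclideanSpace ℝ (Fin d)))
    (b : 𝒜 → EuclideanSpace ℝ (Fin d)) (p : 𝒜 → ℝ)
    (hA : ∀ j, ‖((A j : EuclideanSpace ℝ (Fin d) →L[ℝ] EuclideanSpace ℝ (Fin d)))‖ < 1)
    (hp0 : ∀ j, 0 < p j) (hp1 : ∀ j, p j < 1) (hpsum : ∑ j, p j = 1)
    (f : 𝒜 → EuclideanSpace ℝ (Fin d) → EuclideanSpace ℝ (Fin d))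
    (hf : ∀ j x, f j x = A j x + b j)
    (F : Set (EuclideanSpace ℝ (Fin d))) (hFc : IsCompact F) (hFne : F.Nonempty)
    (hFinv : F = ⋃ j, f j '' F) (hFnt : F.Nontrivial)
    (μ : Measure (EuclideanSpace ℝ (Fin d))) [IsProbabilityMeasure μ]
    (hμ : μ = ∑ j, ENNReal.ofReal (p j) • μ.map (f j))
    (hsupp : μ Fᶜ = 0) :
    ∃ C₂ > (0:ℝ), ∃ s₂ > (0:ℝ), ∃ r₀ > (0:ℝ),
      (∀ (x : EuclideanSpace ℝ (Fin d)) (r : ℝ), 0 < r → r ≤ r₀ →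
        μ (ball x r) ≤ ENNReal.ofReal (C₂ * r ^ s₂)) ∧
      ∀ x : EuclideanSpace ℝ (Fin d), μ {x} = 0 := by
  classical
  -- continuity / measurability
  have hcont : ∀ j, Continuous (f j) := by
    intro j
    have : f j = fun x => A j x + b j := funext (hf j)
    rw [this]; exact ((A j).continuous).add continuous_const
  have hfm : ∀ j, Measurable (f j) := fun j => (hcont j).measurable
  -- Lipschitz constants
  set ρ : ℝ≥0 :=
    Finset.univ.sup (fun j =>
      ‖((A j : EuclideanSpace ℝ (Fin d) →L[ℝ] EuclideanSpace ℝ (Fin d)))‖₊) with hρdef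
  have hρ1 : ρ < 1 := by
    rw [hρdef, Finset.sup_lt_iff (by norm_num : (0:ℝ≥0) < 1)]
    intro j _
    exact_mod_cast hA j
  have hρ1' : (ρ:ℝ) < 1 := by exact_mod_cast hρ1
  have hlip : ∀ j, LipschitzWith ρ (f j) := by
    intro j
    have h1 : LipschitzWith
        ‖((A j : EuclideanSpace ℝ (Fin d) →L[ℝ] EuclideanSpace ℝ (Fin d)))‖₊ (f j) := by
      intro x y
      simpa [hf, edist_add_right] using
        ((A j : EuclideanSpace ℝ (Fin d) →L[ℝ] EuclideanSpace ℝ (Fin d))).lipschitz x y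
    exact h1.weaken (Finset.le_sup (f := fun j => ‖((A j : EuclideanSpace ℝ (Fin d) →L[ℝ] EuclideanSpace ℝ (Fin d)))‖₊) (Finset.mem_univ j))
  -- inverses of the maps
  set g : 𝒜 → EuclideanSpace ℝ (Fin d) → EuclideanSpace ℝ (Fin d) :=
    fun j x => (A j).symm (x - b j) with hgdef
  set κ : ℝ≥0 := (Finset.univ.sup fun j =>
      ‖(((A j).symm : EuclideanSpace ℝ (Fin d) →L[ℝ] EuclideanSpace ℝ (Fin d)))‖₊) ⊔ 1 with hκdef
  have hglip : ∀ j, LipschitzWith κ (g j) := by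
    intro j
    have h1 : LipschitzWith
        ‖(((A j).symm : EuclideanSpace ℝ (Fin d) →L[ℝ] EuclideanSpace ℝ (Fin d)))‖₊ (g j) := by
      intro x y
      simpa [hgdef, edist_sub_right] using
        (((A j).symm : EuclideanSpace ℝ (Fin d) →L[ℝ] EuclideanSpace ℝ (Fin d))).lipschitz
          (x - b j) (y - b j)
    exact h1.weaken ((Finset.le_sup (f := fun j => ‖(((A j).symm : EuclideanSpace ℝ (Fin d) →L[ℝ] EuclideanSpace ℝ (Fin d)))‖₊) (Finset.mem_univ j)).trans le_sup_left)
  have hgf : ∀ j x, g j (f j x) = x := by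
    intro j x
    simp [hgdef, hf, add_sub_cancel_right]
  -- F facts
  have hFsub : ∀ j, f j '' F ⊆ F := fun j =>
    le_of_le_of_eq (Set.subset_iUnion (fun j => f j '' F) j) hFinv.symm
  obtain ⟨a0, ha0, b0, hb0, hab⟩ := hFnt
  set D := dist a0 b0 with hD
  have hD0 : 0 < D := dist_pos.2 hab
  set δ := D/3 with hδeq
  have hδ0 : 0 < δ := by positivity
  -- choose level n
  obtain ⟨n, hn⟩ : ∃ n : ℕ, (ρ:ℝ)^n * Metric.diam F < δ := by
    obtain ⟨n, hn⟩ := exists_pow_lt_of_lt_one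
      (show (0:ℝ) < δ/(Metric.diam F + 1) by positivity) hρ1'
    refine ⟨n, ?_⟩
    have hd1 : (0:ℝ) < Metric.diam F + 1 := by positivity
    have h2 := mul_lt_mul_of_pos_right hn hd1
    rw [div_mul_cancel₀ _ hd1.ne'] at h2
    have h3 : (ρ:ℝ)^n * Metric.diam F ≤ (ρ:ℝ)^n * (Metric.diam F + 1) := by
      have := pow_nonneg (ρ.coe_nonneg) n
      nlinarith
    linarith
  -- cylinders
  obtain ⟨w1, hw1⟩ := mem_compWord_image f hFinv.le n ha0
  obtain ⟨w2, hw2⟩ := mem_compWord_image f hFinv.le n hb0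
  set C : (Fin n → 𝒜) → Set (EuclideanSpace ℝ (Fin d)) :=
    fun w => compWord f n w '' F with hCdef
  have hCsubF : ∀ w, C w ⊆ F := fun w => compWord_image_subset f hFsub n w
  have hCbd : ∀ w, Bornology.IsBounded (C w) := fun w => hFc.isBounded.subset (hCsubF w)
  have hCdiam : ∀ w, Metric.diam (C w) < δ := by
    intro w
    have h1 := (lipschitz_compWord hlip n w).diam_image_le F hFc.isBounded
    calc Metric.diam (C w) ≤ ((ρ^n : ℝ≥0):ℝ) * Metric.diam F := h1
      _ = (ρ:ℝ)^n * Metric.diam F := by push_cast; ring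
      _ < δ := hn
  have hsep : ∀ y ∈ C w1, ∀ z ∈ C w2, δ ≤ dist y z := by
    intro y hy z hz
    have h1 : dist a0 y ≤ Metric.diam (C w1) := Metric.dist_le_diam_of_mem (hCbd w1) hw1 hy
    have h2 : dist z b0 ≤ Metric.diam (C w2) := Metric.dist_le_diam_of_mem (hCbd w2) hz hw2
    have h3 : D ≤ dist a0 y + dist y z + dist z b0 := dist_triangle4 a0 y z b0
    have h4 := hCdiam w1
    have h5 := hCdiam w2
    linarith
  have hw12 : w1 ≠ w2 := by
    intro h
    have := hsep a0 hw1 a0 (h ▸ hw1)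
    simp only [dist_self] at this
    linarith
  -- probabilities of words
  set P : (Fin n → 𝒜) → ℝ := fun w => ∏ i, p (w i) with hPdef
  have hP0 : ∀ w, 0 < P w := fun w => Finset.prod_pos fun i _ => hp0 _
  have hPsum : ∑ w : Fin n → 𝒜, P w = 1 := by
    have h := Finset.prod_univ_sum (fun _ : Fin n => (Finset.univ : Finset 𝒜)) (fun _ j => p j)
    rw [Fintype.piFinset_univ] at h
    simp only [hpsum] at h
    simpa using h.symm
  set pm := min (P w1) (P w2) with hpmdef
  have hpm0 : 0 < pm := lt_min (hP0 w1) (hP0 w2)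
  set t : ℝ := 1 - pm with htdef
  have ht1 : t < 1 := by simp only [htdef]; linarith
  have ht0 : 0 < t := by
    have h12 : P w1 + P w2 ≤ 1 := by
      have he : P w1 + P w2 = ∑ w ∈ ({w1, w2} : Finset (Fin n → 𝒜)), P w :=
        (Finset.sum_pair hw12).symm
      rw [he, ← hPsum]
      exact Finset.sum_le_sum_of_subset_of_nonneg (Finset.subset_univ _)
        (fun w _ _ => (hP0 w).le)
    have : pm ≤ P w1 := min_le_left _ _
    simp only [htdef]
    linarith [hP0 w2]
  -- expansion constant
  set K : ℝ := max ((κ:ℝ)^n) 2 with hKdef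
  have hK2 : (2:ℝ) ≤ K := le_max_right _ _
  have hK1 : (1:ℝ) < K := by linarith
  have hK0 : (0:ℝ) < K := by linarith
  have hκK : ((κ^n : ℝ≥0):ℝ) ≤ K := by
    push_cast
    exact le_max_left _ _
  -- inverse maps for words
  choose G hGlip hGf using fun w : Fin n → 𝒜 => inverse_compWord hglip hgf n w
  have hpre : ∀ (w : Fin n → 𝒜) (x : EuclideanSpace ℝ (Fin d)) (r : ℝ), 0 < r →
      compWord f n w ⁻¹' ball x r ⊆ ball (G w x) (K * r) := by
    intro w x r hr y hy
    simp only [Set.mem_preimage, mem_ball] at hy ⊢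
    have h1 : dist y (G w x) ≤ ((κ^n : ℝ≥0):ℝ) * dist (compWord f n w y) x := by
      have h := (hGlip w).dist_le_mul (compWord f n w y) x
      rwa [hGf w y] at h
    calc dist y (G w x) ≤ ((κ^n : ℝ≥0):ℝ) * dist (compWord f n w y) x := h1
      _ ≤ K * dist (compWord f n w y) x := mul_le_mul_of_nonneg_right hκK dist_nonneg
      _ < K * r := mul_lt_mul_of_pos_left hy hK0
  -- decomposition of μ at level n
  have hdec := decomp_measure f hfm (fun j => ENNReal.ofReal (p j)) μ hμ n
  have hqP : ∀ w : Fin n → 𝒜,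
      (∏ i, ENNReal.ofReal (p (w i))) = ENNReal.ofReal (P w) :=
    fun w => (ENNReal.ofReal_prod_of_nonneg (fun i _ => (hp0 _).le)).symm
  set Φ : ℝ → ℝ≥0∞ := fun r => ⨆ y, μ (ball y r) with hΦdef
  have hΦle : ∀ x r, μ (ball x r) ≤ Φ r := fun x r => le_iSup (fun y => μ (ball y r)) x
  have hΦ1 : ∀ r, Φ r ≤ 1 := fun r => iSup_le fun y => prob_le_one
  set r₀ := δ/4 with hr₀def
  have hr₀0 : 0 < r₀ := by positivity
  -- key step
  have hstep : ∀ (x : EuclideanSpace ℝ (Fin d)) (r : ℝ), 0 < r → r ≤ r₀ →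
      μ (ball x r) ≤ ENNReal.ofReal t * Φ (K*r) := by
    intro x r hr hrr₀
    have hmiss : (∀ y ∈ ball x r, y ∉ C w1) ∨ (∀ y ∈ ball x r, y ∉ C w2) := by
      by_contra hcon
      push_neg at hcon
      obtain ⟨⟨y, hy, hyC⟩, ⟨z, hz, hzC⟩⟩ := hcon
      have h1 := hsep y hyC z hzC
      rw [mem_ball] at hy hz
      have h2 : dist y z ≤ dist y x + dist x z := dist_triangle y x z
      rw [dist_comm x z] at h2
      have : r₀ = δ/4 := hr₀def
      linarith
    obtain ⟨w', hwmiss, hwpm⟩ : ∃ w', (∀ y ∈ ball x r, y ∉ C w') ∧ pm ≤ P w' :=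
      hmiss.elim (fun h => ⟨w1, h, min_le_left _ _⟩) (fun h => ⟨w2, h, min_le_right _ _⟩)
    have hball : μ (ball x r)
        = ∑ w : Fin n → 𝒜, ENNReal.ofReal (P w) * μ (compWord f n w ⁻¹' ball x r) := by
      conv_lhs => rw [hdec]
      rw [Measure.finset_sum_apply]
      refine Finset.sum_congr rfl fun w _ => ?_
      rw [Measure.smul_apply, smul_eq_mul,
        Measure.map_apply (measurable_compWord hfm n w) measurableSet_ball, hqP w]
    have hw'0 : μ (compWord f n w' ⁻¹' ball x r) = 0 := by
      refine measure_mono_null ?_ hsupp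
      intro y hy
      simp only [Set.mem_preimage] at hy
      simp only [Set.mem_compl_iff]
      intro hyF
      exact hwmiss _ hy ⟨y, hyF, rfl⟩
    have hother : ∀ w : Fin n → 𝒜, μ (compWord f n w ⁻¹' ball x r) ≤ Φ (K*r) :=
      fun w => (measure_mono (hpre w x r hr)).trans (hΦle _ _)
    calc μ (ball x r)
        = ∑ w : Fin n → 𝒜, ENNReal.ofReal (P w) * μ (compWord f n w ⁻¹' ball x r) := hball
      _ = ∑ w ∈ Finset.univ.erase w',
            ENNReal.ofReal (P w) * μ (compWord f n w ⁻¹' ball x r) := by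
          rw [← Finset.add_sum_erase _ _ (Finset.mem_univ w'), hw'0, mul_zero, zero_add]
      _ ≤ ∑ w ∈ Finset.univ.erase w', ENNReal.ofReal (P w) * Φ (K*r) :=
          Finset.sum_le_sum fun w _ => mul_le_mul_right (hother w) _
      _ = (∑ w ∈ Finset.univ.erase w', ENNReal.ofReal (P w)) * Φ (K*r) := by
          rw [Finset.sum_mul]
      _ ≤ ENNReal.ofReal t * Φ (K*r) := by
          refine mul_le_mul_left ?_ _
          rw [← ENNReal.ofReal_sum_of_nonneg (fun w _ => (hP0 w).le)]
          apply ENNReal.ofReal_le_ofReal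
          have he : P w' + ∑ w ∈ Finset.univ.erase w', P w = 1 := by
            rw [Finset.add_sum_erase _ _ (Finset.mem_univ w')]; exact hPsum
          simp only [htdef]
          linarith
  -- iteration
  have hiter : ∀ (m : ℕ) (r:ℝ), 0 < r → K^m * r ≤ K * r₀ → Φ r ≤ (ENNReal.ofReal t)^m := by
    intro m
    induction m with
    | zero => intro r hr h; simpa using hΦ1 r
    | succ m ih =>
      intro r hr h
      have hKm1 : K ≤ K^(m+1) := by
        calc K = K^1 := (pow_one K).symm
        _ ≤ K^(m+1) := pow_le_pow_right₀ (by linarith) (by omega)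
      have hKrr : K * r ≤ K * r₀ :=
        le_trans (mul_le_mul_of_nonneg_right hKm1 hr.le) h
      have hrr₀ : r ≤ r₀ := le_of_mul_le_mul_left hKrr hK0
      have h1 : Φ r ≤ ENNReal.ofReal t * Φ (K*r) :=
        iSup_le fun y => hstep y r hr hrr₀
      have h2 : Φ (K*r) ≤ (ENNReal.ofReal t)^m := by
        apply ih (K*r) (by positivity)
        calc K^m * (K*r) = K^(m+1) * r := by ring
        _ ≤ K * r₀ := h
      calc Φ r ≤ ENNReal.ofReal t * Φ (K*r) := h1
      _ ≤ ENNReal.ofReal t * (ENNReal.ofReal t)^m := mul_le_mul_right h2 _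
      _ = (ENNReal.ofReal t)^(m+1) := by ring
  -- exponent and constant
  set s : ℝ := Real.logb K t⁻¹ with hsdef
  have hs0 : 0 < s := Real.logb_pos hK1 ((one_lt_inv₀ ht0).2 ht1)
  have hKs : K ^ (-s) = t := by
    rw [hsdef, Real.logb_inv, neg_neg]
    exact Real.rpow_logb hK0 (by linarith) ht0
  set C₂ : ℝ := (r₀ ^ s)⁻¹ with hC₂def
  have hC₂0 : 0 < C₂ := by
    have : (0:ℝ) < r₀ ^ s := Real.rpow_pos_of_pos hr₀0 s
    positivity
  -- main bound
  have hmain : ∀ (x : EuclideanSpace ℝ (Fin d)) (r : ℝ), 0 < r → r ≤ r₀ →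
      μ (ball x r) ≤ ENNReal.ofReal (C₂ * r ^ s) := by
    intro x r hr hrr₀
    have hex : ∃ m : ℕ, r₀ < K^m * r := by
      obtain ⟨m, hm⟩ := pow_unbounded_of_one_lt (r₀/r) hK1
      exact ⟨m, by rwa [div_lt_iff₀ hr] at hm⟩
    set m := Nat.find hex with hmdef
    have hm1 : r₀ < K^m * r := Nat.find_spec hex
    have hm2 : K^m * r ≤ K * r₀ := by
      rcases Nat.eq_zero_or_pos m with h0 | h0
      · rw [h0]
        simp only [pow_zero, one_mul]
        nlinarith
      · have hnot := Nat.find_min hex (show m - 1 < m by omega)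
        push_neg at hnot
        have hKsplit : K^m = K * K^(m-1) := by
          rw [← pow_succ']
          congr 1
          omega
        rw [hKsplit, mul_assoc]
        exact mul_le_mul_of_nonneg_left hnot hK0.le
    have hΦr : μ (ball x r) ≤ (ENNReal.ofReal t)^m := (hΦle x r).trans (hiter m r hr hm2)
    have hKm0 : (0:ℝ) < K^m := pow_pos hK0 m
    have h1 : ((K^m : ℝ))⁻¹ ≤ r / r₀ := by
      have h2 : r₀/r < K^m := by rwa [div_lt_iff₀ hr]
      have h3 : (0:ℝ) < r₀/r := by positivity
      have h4 := inv_strictAnti₀ h3 h2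
      rw [inv_div] at h4
      exact h4.le
    have htm : t^m ≤ C₂ * r ^ s := by
      have e1 : t^m = ((K^m : ℝ))⁻¹ ^ s := by
        rw [← hKs, ← Real.rpow_natCast (K ^ (-s)) m, ← Real.rpow_mul hK0.le,
          mul_comm, Real.rpow_mul hK0.le, Real.rpow_natCast,
          Real.rpow_neg (pow_nonneg hK0.le m), ← Real.inv_rpow (pow_nonneg hK0.le m)]
      rw [e1]
      calc ((K^m : ℝ))⁻¹ ^ s ≤ (r / r₀) ^ s :=
            Real.rpow_le_rpow (by positivity) h1 hs0.le
        _ = r ^ s / r₀ ^ s := Real.div_rpow hr.le hr₀0.le s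
        _ = C₂ * r ^ s := by rw [hC₂def, div_eq_mul_inv, mul_comm]
    calc μ (ball x r) ≤ (ENNReal.ofReal t)^m := hΦr
      _ = ENNReal.ofReal (t^m) := by rw [ENNReal.ofReal_pow ht0.le]
      _ ≤ ENNReal.ofReal (C₂ * r ^ s) := ENNReal.ofReal_le_ofReal htm
  -- no atoms
  have hatom : ∀ x : EuclideanSpace ℝ (Fin d), μ {x} = 0 := by
    intro x
    refine le_antisymm ?_ zero_le
    have hlim : Filter.Tendsto (fun r : ℝ => ENNReal.ofReal (C₂ * r ^ s))
        (nhdsWithin 0 (Set.Ioi 0)) (nhds 0) := by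
      have h2 : ContinuousAt (fun r : ℝ => r ^ s) 0 :=
        Real.continuousAt_rpow_const 0 s (Or.inr hs0.le)
      have h3 := h2.tendsto.mono_left (nhdsWithin_le_nhds (s := Set.Ioi (0:ℝ)))
      rw [Real.zero_rpow hs0.ne'] at h3
      have h4 : Filter.Tendsto (fun r : ℝ => C₂ * r ^ s)
          (nhdsWithin 0 (Set.Ioi 0)) (nhds 0) := by
        simpa using h3.const_mul C₂
      have h5 := ENNReal.tendsto_ofReal h4
      simpa using h5
    refine ge_of_tendsto hlim ?_
    filter_upwards [Ioo_mem_nhdsGT_of_mem (Set.left_mem_Ico.2 hr₀0)] with r hr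
    calc μ {x} ≤ μ (ball x r) := measure_mono (Set.singleton_subset_iff.2 (mem_ball_self hr.1))
      _ ≤ ENNReal.ofReal (C₂ * r ^ s) := hmain x r hr.1 hr.2.le
  exact ⟨C₂, hC₂0, s, hs0, r₀, hr₀0, hmain, hatom⟩
end

section
/- Let μ be a Borel probability measure on the torus 𝕋^d = ℝ^d/ℤ^d whose Fourier coefficients satisfy μ̂(m) → 0 as |m| → ∞ (a Rajchman measure), and let F = supp μ. Suppose F ⊆ 𝕋^d and x ∉ F. Then for the one-dimensional case d = 1 the symmetric partial sums of the Fourier series of μ converge to 0 at x: lim_{N→∞} ∑_{|m| ≤ N} μ̂(m) e^{2πi m x} = 0. -/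
open MeasureTheory Filter

section MenshovAux

open Complex

lemma my_fourier_pt_add (n : ℤ) (a b : UnitAddCircle) :
    (fourier n (a + b) : ℂ) = fourier n a * fourier n b := by
  simp_rw [fourier_apply, smul_add, AddCircle.toCircle_add, Circle.coe_mul]

lemma my_fourier_pt_neg (n : ℤ) (a : UnitAddCircle) :
    (fourier n (-a) : ℂ) = fourier (-n) a := by
  rw [fourier_apply, fourier_apply, smul_neg, ← neg_smul]

lemma my_fourier_eq_one {t : UnitAddCircle} (h : (fourier 1 t : ℂ) = 1) : t = 0 := by
  have h1 : ((AddCircle.toCircle t : Circle) : ℂ) = ((1 : Circle) : ℂ) := by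
    rw [← fourier_one]; simpa using h
  have h2 : AddCircle.toCircle t = AddCircle.toCircle (0 : UnitAddCircle) := by
    rw [AddCircle.toCircle_zero]
    exact Circle.coe_injective h1
  exact AddCircle.injective_toCircle one_ne_zero h2

lemma my_fourier_zpow (m : ℤ) (t : UnitAddCircle) :
    (fourier m t : ℂ) = (fourier 1 t : ℂ) ^ m := by
  have hz : (fourier 1 t : ℂ) ≠ 0 := Circle.coe_ne_zero _
  induction m using Int.induction_on with
  | zero => simp
  | succ n ih => rw [fourier_add, ih, zpow_add_one₀ hz]
  | pred n ih =>
      rw [show (-(n:ℤ)-1) = (-(n:ℤ)) + (-1) by ring, fourier_add, ih, zpow_add₀ hz]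
      congr 1
      rw [zpow_neg_one, show ((-1 : ℤ)) = -(1:ℤ) from rfl, fourier_neg]
      exact ((Complex.inv_eq_conj (Circle.norm_coe _)).symm)

lemma my_geom (z : ℂ) (hz : z ≠ 0) (N : ℕ) :
    (z - 1) * ∑ m ∈ Finset.Icc (-(N:ℤ)) (N:ℤ), z ^ m = z ^ ((N:ℤ)+1) - z ^ (-(N:ℤ)) := by
  induction N with
  | zero => simp [mul_comm]
  | succ n ih =>
      have hset : Finset.Icc (-((n+1:ℕ):ℤ)) ((n+1:ℕ):ℤ)
          = insert (-((n+1:ℕ):ℤ)) (insert ((n+1:ℕ):ℤ) (Finset.Icc (-(n:ℕ):ℤ) (n:ℕ))) := by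
        ext m; simp only [Finset.mem_Icc, Finset.mem_insert]; omega
      rw [hset, Finset.sum_insert, Finset.sum_insert]
      · have h1 : z ^ (((n:ℕ):ℤ)+1+1) = z ^ (((n:ℕ):ℤ)+1) * z := zpow_add_one₀ hz _
        have h2 : z ^ (-((n:ℕ):ℤ)) = z ^ (-(((n:ℕ):ℤ)+1)) * z := by
          rw [← zpow_add_one₀ hz]; ring_nf
        push_cast
        push_cast at ih h1 h2
        linear_combination ih - h1 - h2
      · simp only [Finset.mem_Icc]; omega
      · simp only [Finset.mem_insert, Finset.mem_Icc]; omega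

lemma my_integral_const_mul (μ : Measure UnitAddCircle) (a : ℂ) (f : UnitAddCircle → ℂ) :
    ∫ y, a * f y ∂μ = a * ∫ y, f y ∂μ := by
  simpa [smul_eq_mul] using integral_smul (μ := μ) a f

/-- The Rajchman property transfers to integrals against arbitrary integrable densities. -/
lemma my_transfer (μ : Measure UnitAddCircle) [IsProbabilityMeasure μ]
    (c : ℤ → ℂ) (hc : ∀ m : ℤ, c m = ∫ x, fourier (-m) x ∂μ)
    (hR : Tendsto c cofinite (nhds 0))
    (f : UnitAddCircle → ℂ) (hf : Integrable f μ) :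
    Tendsto (fun n : ℤ => ∫ y, f y * fourier (-n) y ∂μ) cofinite (nhds 0) := by
  have int_cont : ∀ (q : C(UnitAddCircle, ℂ)) (n : ℤ),
      Integrable (fun y => q y * fourier (-n) y) μ := fun q n =>
    ((q.continuous.mul (fourier (-n)).continuous).integrable_of_hasCompactSupport
      (HasCompactSupport.of_compactSpace _))
  have nf : ∀ (m : ℤ) (y : UnitAddCircle), ‖(fourier m y : ℂ)‖ = 1 := fun m y =>
    Circle.norm_coe _
  have spanP : ∀ p : C(UnitAddCircle, ℂ), p ∈ Submodule.span ℂ (Set.range (@fourier 1)) →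
      Tendsto (fun n : ℤ => ∫ y, p y * fourier (-n) y ∂μ) cofinite (nhds 0) := by
    intro p hp
    induction hp using Submodule.span_induction with
    | mem q hq =>
        obtain ⟨k, rfl⟩ := hq
        have key : ∀ n : ℤ, (∫ y, fourier k y * fourier (-n) y ∂μ) = c (n - k) := by
          intro n
          rw [hc (n - k)]
          congr 1
          ext y
          rw [← fourier_add]
          congr 1
          ring
        simp_rw [key]
        exact hR.comp ((sub_left_injective).tendsto_cofinite)
    | zero => simpa using tendsto_const_nhds
    | add q r hq hr ihq ihr =>
        have : ∀ n : ℤ, (∫ y, (q + r) y * fourier (-n) y ∂μ)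
            = (∫ y, q y * fourier (-n) y ∂μ) + ∫ y, r y * fourier (-n) y ∂μ := by
          intro n
          rw [← integral_add (int_cont q n) (int_cont r n)]
          congr 1; ext y
          simp [add_mul]
        simp_rw [this]
        simpa using ihq.add ihr
    | smul a q hq ihq =>
        have : ∀ n : ℤ, (∫ y, (a • q) y * fourier (-n) y ∂μ)
            = a * ∫ y, q y * fourier (-n) y ∂μ := by
          intro n
          rw [← smul_eq_mul, ← integral_smul]
          congr 1; ext y
          simp [smul_mul_assoc, mul_assoc]
        simp_rw [this]
        simpa using ihq.const_mul a
  have int_fe : ∀ n : ℤ, Integrable (fun y => f y * fourier (-n) y) μ := by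
    intro n
    exact (hf.bdd_mul (fourier (-n)).continuous.aestronglyMeasurable
      (ae_of_all _ fun y => le_of_eq (Circle.norm_coe _))).congr
      (Filter.Eventually.of_forall fun y => mul_comm _ _)
  rw [NormedAddCommGroup.tendsto_nhds_zero]
  intro ε hε
  obtain ⟨h, hh, hint⟩ := hf.exists_boundedContinuous_integral_sub_le
    (show (0:ℝ) < ε/3 by linarith)
  have hcl : (h.toContinuousMap : C(UnitAddCircle, ℂ)) ∈
      closure ((Submodule.span ℂ (Set.range (@fourier 1))) : Set C(UnitAddCircle, ℂ)) := by
    rw [← Submodule.topologicalClosure_coe, span_fourier_closure_eq_top]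
    trivial
  obtain ⟨p, hpmem, hpd⟩ := Metric.mem_closure_iff.1 hcl (ε/3) (by linarith)
  have hTp := spanP p hpmem
  have hev : ∀ᶠ n : ℤ in cofinite, ‖∫ y, p y * fourier (-n) y ∂μ‖ < ε/3 :=
    (NormedAddCommGroup.tendsto_nhds_zero.1 hTp) (ε/3) (by linarith)
  filter_upwards [hev] with n hn
  have Ih : Integrable (fun y => (h y : ℂ)) μ := hint
  have Ip : Integrable (fun y => p y) μ :=
    p.continuous.integrable_of_hasCompactSupport (HasCompactSupport.of_compactSpace _)
  have Ifh : Integrable (fun y => ‖f y - h y‖) μ := (hf.sub Ih).norm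
  have Ihp : Integrable (fun y => ‖(h y : ℂ) - p y‖) μ := ((Ih.sub Ip).norm)
  have key1 : ‖∫ y, f y * fourier (-n) y ∂μ - ∫ y, p y * fourier (-n) y ∂μ‖
      ≤ (∫ y, ‖f y - h y‖ ∂μ) + ∫ y, ‖(h y : ℂ) - p y‖ ∂μ := by
    rw [← integral_sub (int_fe n) (int_cont p n)]
    calc ‖∫ y, (f y * fourier (-n) y - p y * fourier (-n) y) ∂μ‖
        ≤ ∫ y, ‖f y * fourier (-n) y - p y * fourier (-n) y‖ ∂μ :=
          norm_integral_le_integral_norm _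
      _ = ∫ y, ‖f y - p y‖ ∂μ := by
          congr 1; ext y
          rw [← sub_mul, norm_mul, nf, mul_one]
      _ ≤ ∫ y, (‖f y - h y‖ + ‖(h y : ℂ) - p y‖) ∂μ := by
          apply integral_mono ((hf.sub Ip).norm) (Ifh.add Ihp)
          intro y
          calc ‖f y - p y‖ = ‖(f y - h y) + ((h y : ℂ) - p y)‖ := by
                rw [sub_add_sub_cancel]
            _ ≤ ‖f y - h y‖ + ‖(h y : ℂ) - p y‖ := norm_add_le _ _
      _ = (∫ y, ‖f y - h y‖ ∂μ) + ∫ y, ‖(h y : ℂ) - p y‖ ∂μ := integral_add Ifh Ihp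
  have key2 : (∫ y, ‖(h y : ℂ) - p y‖ ∂μ) ≤ ε/3 := by
    have hb : ∀ y, ‖(h y : ℂ) - p y‖ ≤ ε/3 := by
      intro y
      have := ContinuousMap.dist_apply_le_dist (f := h.toContinuousMap) (g := p) y
      rw [dist_eq_norm] at this
      exact le_trans this (le_of_lt hpd)
    calc (∫ y, ‖(h y : ℂ) - p y‖ ∂μ) ≤ ∫ _, ε/3 ∂μ :=
          integral_mono Ihp (integrable_const _) hb
      _ = ε/3 := by simp
  calc ‖∫ y, f y * fourier (-n) y ∂μ‖
      ≤ ‖∫ y, f y * fourier (-n) y ∂μ - ∫ y, p y * fourier (-n) y ∂μ‖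
        + ‖∫ y, p y * fourier (-n) y ∂μ‖ := by
          simpa using norm_add_le ((∫ y, f y * fourier (-n) y ∂μ) - ∫ y, p y * fourier (-n) y ∂μ)
            (∫ y, p y * fourier (-n) y ∂μ)
    _ < (ε/3 + ε/3) + ε/3 := by
        have := key1.trans (by linarith [key2, hh] :
          (∫ y, ‖f y - h y‖ ∂μ) + (∫ y, ‖(h y : ℂ) - p y‖ ∂μ) ≤ ε/3 + ε/3)
        linarith
    _ = ε := by ring

end MenshovAux

/-- Menshov localisation for Rajchman measures on the circle: if the Fourier coefficients of a
probability measure `μ` on `𝕋 = ℝ/ℤ` tend to `0` and `x` lies outside the support of `μ`, then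
the symmetric partial sums of the Fourier series of `μ` converge to `0` at `x`. -/
theorem stmt19 (μ : Measure UnitAddCircle) [IsProbabilityMeasure μ]
    (c : ℤ → ℂ) (hc : ∀ m : ℤ, c m = ∫ x, fourier (-m) x ∂μ)
    (hRajchman : Tendsto c cofinite (nhds 0))
    (x : UnitAddCircle) (U : Set UnitAddCircle) (hU : U ∈ nhds x) (hUμ : μ U = 0) :
    Tendsto (fun N : ℕ => ∑ m ∈ Finset.Icc (-(N:ℤ)) (N:ℤ), c m * fourier m x)
      atTop (nhds 0) := by
  classical
  have nf : ∀ (m : ℤ) (y : UnitAddCircle), ‖(fourier m y : ℂ)‖ = 1 := fun m y =>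
    Circle.norm_coe _
  obtain ⟨δ, hδ, hball⟩ := Metric.mem_nhds_iff.1 hU
  have hμball : μ (Metric.ball x δ) = 0 := measure_mono_null hball hUμ
  set g : UnitAddCircle → ℂ :=
    fun y => if y ∈ Metric.ball x δ then 0 else ((fourier 1 (x - y) : ℂ) - 1)⁻¹ with hg
  have hne : ∀ y : UnitAddCircle, y ∉ Metric.ball x δ → (fourier 1 (x - y) : ℂ) - 1 ≠ 0 := by
    intro y hy hzero
    have h1 : (fourier 1 (x - y) : ℂ) = 1 := by linear_combination hzero
    have hxy : x - y = 0 := my_fourier_eq_one h1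
    have hyx : x = y := sub_eq_zero.1 hxy
    rw [← hyx] at hy
    exact hy (Metric.mem_ball_self hδ)
  have hmeas : Measurable g := by
    apply Measurable.ite Metric.isOpen_ball.measurableSet measurable_const
    exact (((fourier 1).continuous.comp (continuous_const.sub continuous_id)).sub
      continuous_const).measurable.inv
  have hbdd : ∃ C : ℝ, ∀ y, ‖g y‖ ≤ C := by
    by_cases hK : ((Metric.ball x δ)ᶜ : Set UnitAddCircle).Nonempty
    · have hcont : Continuous fun y : UnitAddCircle => ‖(fourier 1 (x - y) : ℂ) - 1‖ :=
        (((fourier 1).continuous.comp (continuous_const.sub continuous_id)).sub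
          continuous_const).norm
      obtain ⟨y₀, hy₀K, hy₀min⟩ :=
        (Metric.isOpen_ball.isClosed_compl.isCompact).exists_isMinOn hK hcont.continuousOn
      have hpos : 0 < ‖(fourier 1 (x - y₀) : ℂ) - 1‖ :=
        norm_pos_iff.2 (hne y₀ hy₀K)
      refine ⟨‖(fourier 1 (x - y₀) : ℂ) - 1‖⁻¹, fun y => ?_⟩
      by_cases hy : y ∈ Metric.ball x δ
      · simp only [hg, if_pos hy, norm_zero]
        positivity
      · simp only [hg, if_neg hy, norm_inv]
        exact inv_anti₀ hpos (hy₀min hy)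
    · refine ⟨0, fun y => ?_⟩
      have hy : y ∈ Metric.ball x δ := by
        by_contra hy
        exact hK ⟨y, hy⟩
      rw [hg]
      simp only [if_pos hy, norm_zero]
      exact le_refl 0
  obtain ⟨C, hC⟩ := hbdd
  have Ig : Integrable g μ :=
    Integrable.mono' (integrable_const C) hmeas.aestronglyMeasurable (ae_of_all _ hC)
  have hae : ∀ᵐ y ∂μ, y ∉ Metric.ball x δ := by
    rw [ae_iff]
    simpa [Metric.ball] using hμball
  set J : ℤ → ℂ := fun n => ∫ y, g y * fourier (-n) y ∂μ with hJdef
  have hJ : Tendsto J cofinite (nhds 0) := my_transfer μ c hc hRajchman g Ig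
  have Ige : ∀ n : ℤ, Integrable (fun y => g y * fourier (-n) y) μ := fun n =>
    (Ig.bdd_mul (fourier (-n)).continuous.aestronglyMeasurable
      (ae_of_all _ fun y => le_of_eq (nf _ _))).congr
      (Filter.Eventually.of_forall fun y => mul_comm _ _)
  have hSN : ∀ N : ℕ, (∑ m ∈ Finset.Icc (-(N:ℤ)) (N:ℤ), c m * fourier m x)
      = fourier ((N:ℤ)+1) x * J ((N:ℤ)+1) - fourier (-(N:ℤ)) x * J (-(N:ℤ)) := by
    intro N
    have step1 : ∀ m : ℤ, c m * fourier m x = ∫ y, (fourier m (x - y) : ℂ) ∂μ := by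
      intro m
      rw [hc m, mul_comm, ← smul_eq_mul, ← integral_smul]
      congr 1; ext y
      rw [smul_eq_mul, sub_eq_add_neg, my_fourier_pt_add, my_fourier_pt_neg, mul_comm]
    have intm : ∀ m : ℤ, Integrable (fun y => (fourier m (x - y) : ℂ)) μ := fun m =>
      ((fourier m).continuous.comp
        (continuous_const.sub continuous_id)).integrable_of_hasCompactSupport
        (HasCompactSupport.of_compactSpace _)
    have step2 : (∑ m ∈ Finset.Icc (-(N:ℤ)) (N:ℤ), c m * fourier m x)
        = ∫ y, (∑ m ∈ Finset.Icc (-(N:ℤ)) (N:ℤ), (fourier m (x - y) : ℂ)) ∂μ := by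
      rw [integral_finset_sum _ (fun m _ => intm m)]
      exact Finset.sum_congr rfl fun m _ => step1 m
    have ptwise : ∀ y, y ∉ Metric.ball x δ →
        (∑ m ∈ Finset.Icc (-(N:ℤ)) (N:ℤ), (fourier m (x - y) : ℂ))
        = g y * ((fourier ((N:ℤ)+1) (x - y) : ℂ) - fourier (-(N:ℤ)) (x - y)) := by
      intro y hy
      have hz0 : (fourier 1 (x - y) : ℂ) ≠ 0 := Circle.coe_ne_zero _
      have hz1 : (fourier 1 (x - y) : ℂ) - 1 ≠ 0 := hne y hy
      have hgy : g y = ((fourier 1 (x - y) : ℂ) - 1)⁻¹ := by rw [hg]; exact if_neg hy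
      have hsum : (∑ m ∈ Finset.Icc (-(N:ℤ)) (N:ℤ), (fourier m (x - y) : ℂ))
          = ∑ m ∈ Finset.Icc (-(N:ℤ)) (N:ℤ), ((fourier 1 (x - y) : ℂ)) ^ m :=
        Finset.sum_congr rfl fun m _ => my_fourier_zpow m _
      rw [hsum, my_fourier_zpow ((N:ℤ)+1) (x - y), my_fourier_zpow (-(N:ℤ)) (x - y), hgy,
        eq_inv_mul_iff_mul_eq₀ hz1]
      exact my_geom _ hz0 N
    have step3 : (∫ y, (∑ m ∈ Finset.Icc (-(N:ℤ)) (N:ℤ), (fourier m (x - y) : ℂ)) ∂μ)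
        = ∫ y, g y * ((fourier ((N:ℤ)+1) (x - y) : ℂ) - fourier (-(N:ℤ)) (x - y)) ∂μ :=
      integral_congr_ae (hae.mono fun y hy => ptwise y hy)
    have expand : ∀ y, g y * ((fourier ((N:ℤ)+1) (x - y) : ℂ) - fourier (-(N:ℤ)) (x - y))
        = fourier ((N:ℤ)+1) x * (g y * fourier (-((N:ℤ)+1)) y)
          - fourier (-(N:ℤ)) x * (g y * fourier (-(-(N:ℤ))) y) := by
      intro y
      rw [sub_eq_add_neg x y, my_fourier_pt_add, my_fourier_pt_add, my_fourier_pt_neg,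
        my_fourier_pt_neg]
      ring
    rw [step2, step3]
    simp_rw [expand]
    rw [integral_sub ((Ige _).const_mul _) ((Ige _).const_mul _)]
    congr 1
    · rw [my_integral_const_mul]
    · rw [my_integral_const_mul]
  have inj1 : Function.Injective (fun N : ℕ => ((N:ℤ)+1)) := fun a b h => by simpa using h
  have inj2 : Function.Injective (fun N : ℕ => (-(N:ℤ))) := fun a b h => by simpa using h
  have t1 : Tendsto (fun N : ℕ => ((N:ℤ)+1)) atTop cofinite := by
    rw [← Nat.cofinite_eq_atTop]; exact inj1.tendsto_cofinite
  have t2 : Tendsto (fun N : ℕ => (-(N:ℤ))) atTop cofinite := by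
    rw [← Nat.cofinite_eq_atTop]; exact inj2.tendsto_cofinite
  have hA : Tendsto (fun N : ℕ => J ((N:ℤ)+1)) atTop (nhds 0) := hJ.comp t1
  have hB : Tendsto (fun N : ℕ => J (-(N:ℤ))) atTop (nhds 0) := hJ.comp t2
  have hA' : Tendsto (fun N : ℕ => (fourier ((N:ℤ)+1) x : ℂ) * J ((N:ℤ)+1)) atTop (nhds 0) := by
    apply squeeze_zero_norm (a := fun N : ℕ => ‖J ((N:ℤ)+1)‖)
      (fun N => le_of_eq (by rw [norm_mul, nf, one_mul]))
    simpa using hA.norm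
  have hB' : Tendsto (fun N : ℕ => (fourier (-(N:ℤ)) x : ℂ) * J (-(N:ℤ))) atTop (nhds 0) := by
    apply squeeze_zero_norm (a := fun N : ℕ => ‖J (-(N:ℤ))‖)
      (fun N => le_of_eq (by rw [norm_mul, nf, one_mul]))
    simpa using hB.norm
  have hfin := hA'.sub hB'
  rw [sub_zero] at hfin
  exact hfin.congr fun N => (hSN N).symm
end
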